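/- The tree function satisfies T(1/e) = 1, where T(z) = Σ_{k≥1} k^{k-1} z^k / k! and T satisfies the functional equation T(z) = z·e^{T(z)} on [0, 1/e]. -/

import Mathlib

open Real

/-- The tree function `T(z) = Σ_{k≥1} k^{k-1} z^k / k!`. -/
noncomputable def treeFun (z : ℝ) : ℝ :=
  ∑' k : ℕ, ((k + 1 : ℕ) : ℝ) ^ k * z ^ (k + 1) / ((k + 1).factorial : ℝ)

open Finset Function Filter Set
open scoped fwdDiff Topology NNReal ENNReal

/-! ### Auxiliary combinatorics: iterated forward differences kill low-degree monomials -/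

lemma fwdDiff_iter_pow_eq_zero : ∀ k : ℕ, ∀ d < k, (fwdDiff (1:ℝ))^[k] (fun x : ℝ => x ^ d) = 0 := by
  intro k
  induction k with
  | zero => omega
  | succ k IH =>
    intro d hd
    have hΔ : Δ_[(1:ℝ)] (fun x : ℝ => x ^ d)
        = ∑ i ∈ range d, (d.choose i : ℝ) • (fun x : ℝ => x ^ i) := by
      funext x
      simp only [fwdDiff, Finset.sum_apply, Pi.smul_apply, smul_eq_mul]
      rw [add_pow, Finset.sum_range_succ]
      simp [mul_comm]
    rw [Function.iterate_succ_apply, hΔ, fwdDiff_iter_finset_sum]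
    apply Finset.sum_eq_zero
    intro i hi
    rw [fwdDiff_iter_const_smul, IH i (by
      have := Finset.mem_range.mp hi; omega)]
    simp

lemma alt_sum_pow (d k : ℕ) (h : d < k) :
    ∑ j ∈ range (k + 1), (-1 : ℝ) ^ (k - j) * (k.choose j : ℝ) * (j : ℝ) ^ d = 0 := by
  have H := fwdDiff_iter_eq_sum_shift (1 : ℝ) (fun x : ℝ => x ^ d) k 0
  rw [fwdDiff_iter_pow_eq_zero k d h] at H
  simp only [Pi.zero_apply] at H
  rw [eq_comm] at H
  rw [← H]
  apply Finset.sum_congr rfl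
  intro j hj
  simp only [zsmul_eq_mul, nsmul_eq_mul, mul_one, zero_add]
  push_cast
  ring

/-! ### The coefficients of the tree function -/

/-- Coefficients of the tree function: `tc k = k^(k-1)/k!` for `k ≥ 1`, `tc 0 = 0`. -/
noncomputable def tc (k : ℕ) : ℝ := if k = 0 then 0 else (k : ℝ) ^ (k - 1) / (k.factorial : ℝ)

lemma tc_nonneg (k : ℕ) : 0 ≤ tc k := by
  unfold tc; split <;> positivity

lemma tc_zero : tc 0 = 0 := rfl

lemma tc_one : tc 1 = 1 := by simp [tc]

lemma tc_succ (k : ℕ) : tc (k + 1) = ((k + 1 : ℕ) : ℝ) ^ k / ((k + 1).factorial : ℝ) := by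
  simp [tc]

/-- Key coefficient identity: the Taylor coefficients of `T(t e^{-t})` vanish in degree `≥ 2`. -/
lemma coeff_collapse (n : ℕ) (hn : 2 ≤ n) :
    ∑ kl ∈ Finset.HasAntidiagonal.antidiagonal n, tc kl.1 * (-(kl.1 : ℝ)) ^ kl.2 / (kl.2.factorial : ℝ) = 0 := by
  rw [Finset.Nat.sum_antidiagonal_eq_sum_range_succ_mk]
  have hcongr : ∀ k ∈ range (n + 1),
      tc k * (-(k : ℝ)) ^ (n - k) / ((n - k).factorial : ℝ)
        = ((-1 : ℝ) ^ (n - k) * (n.choose k : ℝ) * (k : ℝ) ^ (n - 1)) / (n.factorial : ℝ) := by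
    intro k hk
    have hkn : k ≤ n := by have := Finset.mem_range.mp hk; omega
    match k with
    | 0 =>
      have h1 : (0 : ℝ) ^ (n - 1) = 0 := by
        apply zero_pow; omega
      simp [tc_zero, h1]
    | (k + 1) =>
      have hk1n : k + 1 ≤ n := hkn
      have hfac : ((n.choose (k + 1) : ℕ) : ℝ) * ((k + 1).factorial : ℝ)
          * ((n - (k + 1)).factorial : ℝ) = (n.factorial : ℝ) := by
        exact_mod_cast congrArg (fun m : ℕ => (m : ℝ))
          (Nat.choose_mul_factorial_mul_factorial hk1n)
      have hneg : (-(((k : ℕ) + 1 : ℕ) : ℝ)) ^ (n - (k + 1))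
          = (-1 : ℝ) ^ (n - (k + 1)) * (((k + 1 : ℕ)) : ℝ) ^ (n - (k + 1)) := by
        rw [neg_pow]
      unfold tc
      simp only [Nat.succ_ne_zero, if_false]
      rw [hneg]
      have hf1 : ((k + 1).factorial : ℝ) ≠ 0 := Nat.cast_ne_zero.mpr (Nat.factorial_ne_zero _)
      have hf2 : (((n - (k + 1)).factorial : ℕ) : ℝ) ≠ 0 :=
        Nat.cast_ne_zero.mpr (Nat.factorial_ne_zero _)
      have hf3 : ((n.factorial : ℕ) : ℝ) ≠ 0 := Nat.cast_ne_zero.mpr (Nat.factorial_ne_zero _)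
      field_simp
      rw [← hfac]
      have hpow' : ((k:ℝ) + 1) ^ k * ((k:ℝ) + 1) ^ (n - (k + 1)) = ((k:ℝ) + 1) ^ (n - 1) := by
        rw [← pow_add]; congr 1; omega
      push_cast; rw [← hpow']
      push_cast
      ring
  rw [Finset.sum_congr rfl hcongr, ← Finset.sum_div]
  rw [alt_sum_pow (n - 1) n (by omega)]
  simp

/-! ### Summability -/

lemma factorial_stirling_lb (k : ℕ) (hk : 1 ≤ k) :
    Real.sqrt (k : ℝ) * ((k : ℝ) / Real.exp 1) ^ k ≤ (k.factorial : ℝ) := by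
  obtain ⟨m, rfl⟩ := Nat.exists_eq_add_of_le hk
  set j := 1 + m with hj
  have hspos : (0 : ℝ) < Real.sqrt (2 * j) * ((j : ℝ) / Real.exp 1) ^ j := by
    have : (0 : ℝ) < (j : ℝ) := by positivity
    positivity
  have hst : 1 ≤ Stirling.stirlingSeq j := by
    have h1 : Real.sqrt π ≤ Stirling.stirlingSeq j := by
      have ha : Antitone (Stirling.stirlingSeq ∘ Nat.succ) := Stirling.stirlingSeq'_antitone
      have ht : Tendsto (Stirling.stirlingSeq ∘ Nat.succ) atTop (𝓝 (Real.sqrt π)) :=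
        Stirling.tendsto_stirlingSeq_sqrt_pi.comp (tendsto_add_atTop_nat 1)
      have := ha.le_of_tendsto ht m
      simpa [hj, Nat.succ_eq_add_one, Nat.add_comm] using this
    have h2 : (1 : ℝ) ≤ Real.sqrt π := by
      rw [show (1:ℝ) = Real.sqrt 1 by simp]
      exact Real.sqrt_le_sqrt (by linarith [Real.pi_gt_three])
    linarith
  have hdef : Stirling.stirlingSeq j = (j.factorial : ℝ) /
      (Real.sqrt (2 * j) * ((j : ℝ) / Real.exp 1) ^ j) := rfl
  rw [hdef, le_div_iff₀ hspos, one_mul] at hst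
  calc Real.sqrt (j : ℝ) * ((j : ℝ) / Real.exp 1) ^ j
      ≤ Real.sqrt (2 * j) * ((j : ℝ) / Real.exp 1) ^ j := by
        apply mul_le_mul_of_nonneg_right
        · apply Real.sqrt_le_sqrt; push_cast; nlinarith [Nat.cast_nonneg (α := ℝ) j]
        · positivity
    _ ≤ (j.factorial : ℝ) := hst

lemma tc_bound (k : ℕ) (hk : 1 ≤ k) {r : ℝ} (hr : 0 ≤ r) (hre : r * Real.exp 1 ≤ 1) :
    tc k * r ^ k ≤ ((k : ℝ) * Real.sqrt k)⁻¹ := by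
  have hkpos : (0 : ℝ) < k := by exact_mod_cast hk
  have hsq : (0 : ℝ) < Real.sqrt k := Real.sqrt_pos.mpr hkpos
  have hfl := factorial_stirling_lb k hk
  have hfpos : (0 : ℝ) < (k.factorial : ℝ) := by
    exact_mod_cast (Nat.factorial_pos k)
  have htc : tc k = (k : ℝ) ^ (k - 1) / (k.factorial : ℝ) := by
    unfold tc; rw [if_neg (by omega)]
  have hb : tc k ≤ (k : ℝ) ^ (k - 1) / (Real.sqrt k * ((k : ℝ) / Real.exp 1) ^ k) := by
    rw [htc]
    apply div_le_div_of_nonneg_left _ _ hfl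
    · positivity
    · positivity
  have heq : (k : ℝ) ^ (k - 1) / (Real.sqrt k * ((k : ℝ) / Real.exp 1) ^ k)
      = (Real.exp 1) ^ k / ((k : ℝ) * Real.sqrt k) := by
    have hkk : (k : ℝ) ^ k = (k : ℝ) ^ (k - 1) * (k : ℝ) := by
      rw [← pow_succ]; congr 1; omega
    rw [div_pow]
    field_simp
    rw [hkk]
  have h1 : tc k * r ^ k ≤ (Real.exp 1) ^ k / ((k : ℝ) * Real.sqrt k) * r ^ k := by
    apply mul_le_mul_of_nonneg_right _ (by positivity)
    rw [← heq]; exact hb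
  have h2 : (Real.exp 1) ^ k / ((k : ℝ) * Real.sqrt k) * r ^ k
      = (r * Real.exp 1) ^ k / ((k : ℝ) * Real.sqrt k) := by
    rw [mul_pow]; ring
  have h3 : (r * Real.exp 1) ^ k ≤ 1 := by
    apply pow_le_one₀ (by positivity) hre
  calc tc k * r ^ k ≤ (r * Real.exp 1) ^ k / ((k : ℝ) * Real.sqrt k) := by rw [← h2]; exact h1
    _ ≤ 1 / ((k : ℝ) * Real.sqrt k) := by
        gcongr
    _ = ((k : ℝ) * Real.sqrt k)⁻¹ := one_div _

lemma summable_aux : Summable (fun k : ℕ => ((k : ℝ) * Real.sqrt k)⁻¹) := by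
  have h32 : (1 : ℝ) < 3 / 2 := by norm_num
  have hs : Summable (fun k : ℕ => ((k : ℝ) ^ ((3 : ℝ) / 2))⁻¹) :=
    (Real.summable_nat_rpow_inv).mpr h32
  apply hs.congr
  intro k
  rcases Nat.eq_zero_or_pos k with rfl | hk
  · simp
  · have hkpos : (0 : ℝ) < k := by exact_mod_cast hk
    rw [show ((3 : ℝ) / 2) = 1 + 1 / 2 by norm_num, Real.rpow_add hkpos, Real.rpow_one,
      ← Real.sqrt_eq_rpow]

lemma summable_tc_mul {r : ℝ} (hr : 0 ≤ r) (hre : r * Real.exp 1 ≤ 1) :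
    Summable (fun k : ℕ => tc k * r ^ k) := by
  apply Summable.of_nonneg_of_le (fun k => mul_nonneg (tc_nonneg k) (pow_nonneg hr k)) _ summable_aux
  intro k
  rcases Nat.eq_zero_or_pos k with rfl | hk
  · simp [tc_zero]
  · exact tc_bound k hk hr hre

/-! ### The tree function as a power series -/

lemma treeFun_eq (z : ℝ) : treeFun z = ∑' k : ℕ, tc k * z ^ k := by
  have h0 : ∀ k : ℕ, ((k + 1 : ℕ) : ℝ) ^ k * z ^ (k + 1) / ((k + 1).factorial : ℝ)
      = tc (k + 1) * z ^ (k + 1) := by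
    intro k; rw [tc_succ]; ring
  unfold treeFun
  rw [tsum_congr h0]
  by_cases hs : Summable (fun k : ℕ => tc k * z ^ k)
  · rw [Summable.tsum_eq_zero_add hs]
    simp [tc_zero]
  · rw [tsum_eq_zero_of_not_summable hs, tsum_eq_zero_of_not_summable]
    intro h
    exact hs ((summable_nat_add_iff 1).mp h)

/-- The tree function's formal power series. -/
noncomputable def tp : FormalMultilinearSeries ℝ ℝ ℝ := FormalMultilinearSeries.ofScalars ℝ tc

lemma tp_sum_eq (z : ℝ) : tp.sum z = treeFun z := by
  rw [treeFun_eq, FormalMultilinearSeries.sum]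
  refine tsum_congr fun n => ?_
  rw [show tp n = FormalMultilinearSeries.ofScalars ℝ tc n from rfl,
    FormalMultilinearSeries.ofScalars_apply_eq, smul_eq_mul]

/-- `1/e` as a nonnegative real. -/
noncomputable def rE : ℝ≥0 := Real.toNNReal (Real.exp 1)⁻¹

lemma rE_coe : (rE : ℝ) = (Real.exp 1)⁻¹ := Real.coe_toNNReal _ (by positivity)

lemma rE_pos : 0 < rE := by
  rw [← NNReal.coe_pos, rE_coe]; positivity

lemma inv_exp_mul_exp : (Real.exp 1)⁻¹ * Real.exp 1 = 1 :=
  inv_mul_cancel₀ (by positivity)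

lemma tp_radius : (rE : ℝ≥0∞) ≤ tp.radius := by
  apply FormalMultilinearSeries.le_radius_of_summable
  have hs : Summable (fun n : ℕ => tc n * (rE : ℝ) ^ n) := by
    rw [rE_coe]
    exact summable_tc_mul (by positivity) (le_of_eq inv_exp_mul_exp)
  refine hs.congr fun n => ?_
  rw [show ‖tp n‖ = tc n from by
    rw [show tp n = FormalMultilinearSeries.ofScalars ℝ tc n from rfl,
      FormalMultilinearSeries.ofScalars_norm, Real.norm_eq_abs, abs_of_nonneg (tc_nonneg n)]]

lemma treeFun_analytic : AnalyticOnNhd ℝ treeFun (EMetric.ball (0 : ℝ) rE) := by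
  have h1 : HasFPowerSeriesOnBall tp.sum tp 0 tp.radius :=
    tp.hasFPowerSeriesOnBall (lt_of_lt_of_le (ENNReal.coe_pos.mpr rE_pos) tp_radius)
  have h2 : HasFPowerSeriesOnBall tp.sum tp 0 rE :=
    h1.mono (ENNReal.coe_pos.mpr rE_pos) tp_radius
  have h3 := h2.analyticOnNhd
  rwa [funext tp_sum_eq] at h3

lemma treeFun_contOn : ContinuousOn treeFun (Set.Icc (0 : ℝ) (Real.exp 1)⁻¹) := by
  rw [show treeFun = fun z : ℝ => ∑' k : ℕ, tc k * z ^ k from funext treeFun_eq]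
  apply continuousOn_tsum (u := fun k : ℕ => tc k * ((Real.exp 1)⁻¹) ^ k)
  · exact fun i => (continuous_const.mul (continuous_pow i)).continuousOn
  · exact summable_tc_mul (by positivity) (le_of_eq inv_exp_mul_exp)
  · intro k x hx
    rw [Real.norm_eq_abs, abs_mul, abs_of_nonneg (tc_nonneg k), abs_pow,
      abs_of_nonneg hx.1]
    exact mul_le_mul_of_nonneg_left (pow_le_pow_left₀ hx.1 hx.2 k) (tc_nonneg k)

lemma exp_eq_tsum_real (x : ℝ) : ∑' m : ℕ, x ^ m / (m.factorial : ℝ) = Real.exp x := by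
  rw [Real.exp_eq_exp_ℝ]
  exact (NormedSpace.expSeries_div_hasSum_exp x).tsum_eq

set_option maxHeartbeats 1000000 in
/-- Regrouping a summable double series by antidiagonals. -/
lemma tsum_antidiag {F : ℕ × ℕ → ℝ} (hFsum : Summable F) :
    ∑' km : ℕ × ℕ, F km = ∑' n : ℕ, ∑ kl ∈ Finset.HasAntidiagonal.antidiagonal n, F kl := by
  have hsig : Summable (fun c : (Σ n : ℕ, {x // x ∈ Finset.HasAntidiagonal.antidiagonal n}) =>
      F (Finset.HasAntidiagonal.sigmaAntidiagonalEquivProd c)) :=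
    Finset.HasAntidiagonal.sigmaAntidiagonalEquivProd.summable_iff.mpr hFsum
  rw [← Finset.HasAntidiagonal.sigmaAntidiagonalEquivProd.tsum_eq F]
  rw [hsig.tsum_sigma' (fun n => (hasSum_fintype _).summable)]
  exact tsum_congr fun n => Finset.tsum_subtype _ F

/-- The key identity `T(t e^{-t}) = t` for small `t`, proved by expanding the double series
and collapsing the coefficients using the alternating-sum identity. -/
lemma g_small {t : ℝ} (ht0 : 0 ≤ t) (ht1 : t ≤ (2 * Real.exp 1)⁻¹) :
    treeFun (t * Real.exp (-t)) = t := by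
  have hexp1 : (0 : ℝ) < Real.exp 1 := Real.exp_pos 1
  have het : Real.exp t ≤ 2 := by
    have h1 : t < Real.log 2 := by
      have h2 : (2 * Real.exp 1)⁻¹ < 1 / 2 := by
        rw [one_div]
        apply inv_strictAnti₀ (by norm_num)
        linarith [Real.exp_one_gt_d9]
      have := Real.log_two_gt_d9
      linarith
    have := Real.exp_lt_exp.mpr h1
    rw [Real.exp_log (by norm_num : (0:ℝ) < 2)] at this
    linarith
  set F : ℕ × ℕ → ℝ :=
    fun km => tc km.1 * t ^ km.1 * ((-(km.1 : ℝ) * t) ^ km.2 / (km.2.factorial : ℝ)) with hF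
  have hrow : ∀ k : ℕ, Summable (fun m => F (k, m)) := fun k =>
    (Real.summable_pow_div_factorial (-(k : ℝ) * t)).mul_left (tc k * t ^ k)
  have hFa : ∀ k m : ℕ, F (k, m) = tc k * t ^ k * ((-(k : ℝ) * t) ^ m / (m.factorial : ℝ)) :=
    fun k m => rfl
  have habs_eq : ∀ k m : ℕ,
      |F (k, m)| = tc k * t ^ k * (((k : ℝ) * t) ^ m / (m.factorial : ℝ)) := by
    intro k m
    rw [hFa]
    simp only [abs_mul, abs_div, abs_pow, abs_neg, Nat.abs_cast,
      abs_of_nonneg (tc_nonneg k), abs_of_nonneg ht0]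
  have hte : t * Real.exp t * Real.exp 1 ≤ 1 := by
    have hi : (2 * Real.exp 1)⁻¹ * (2 * Real.exp 1) = 1 := inv_mul_cancel₀ (by positivity)
    nlinarith [Real.exp_pos t, Real.exp_pos 1, mul_le_mul_of_nonneg_left het ht0]
  have hrowsum : ∀ k : ℕ, (∑' m, |F (k, m)|) = tc k * (t * Real.exp t) ^ k := by
    intro k
    rw [tsum_congr (fun m => habs_eq k m), tsum_mul_left, exp_eq_tsum_real ((k : ℝ) * t),
      Real.exp_nat_mul, mul_pow]
    ring
  have habs : Summable fun km : ℕ × ℕ => |F km| := by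
    rw [summable_prod_of_nonneg (fun km => abs_nonneg _)]
    constructor
    · exact fun k => (hrow k).abs
    · apply Summable.congr _ (fun k => (hrowsum k).symm)
      exact summable_tc_mul (by positivity) hte
  have hFsum : Summable F := habs.of_abs
  have hstep1 : treeFun (t * Real.exp (-t)) = ∑' (k : ℕ) (m : ℕ), F (k, m) := by
    rw [treeFun_eq]
    refine tsum_congr fun k => ?_
    have h1 : ∑' m : ℕ, F (k, m) = tc k * t ^ k * Real.exp (-(k : ℝ) * t) := by
      rw [tsum_congr (fun m => hFa k m), tsum_mul_left, exp_eq_tsum_real]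
    rw [h1, mul_pow, ← Real.exp_nat_mul, show (k : ℝ) * (-t) = -(k : ℝ) * t by ring, mul_assoc]
  have hstep2 : ∑' (k : ℕ) (m : ℕ), F (k, m) = ∑' km : ℕ × ℕ, F km :=
    (hFsum.tsum_prod' hrow).symm
  have hstep3 : ∑' km : ℕ × ℕ, F km = ∑' n : ℕ, ∑ kl ∈ Finset.HasAntidiagonal.antidiagonal n, F kl :=
    tsum_antidiag hFsum
  have hcoeff : ∀ n : ℕ, ∑ kl ∈ Finset.HasAntidiagonal.antidiagonal n, F kl = (if n = 1 then t else 0) := by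
    intro n
    have hterm : ∀ kl ∈ Finset.HasAntidiagonal.antidiagonal n,
        F kl = (tc kl.1 * (-(kl.1 : ℝ)) ^ kl.2 / (kl.2.factorial : ℝ)) * t ^ n := by
      rintro ⟨k, m⟩ hkl
      have hsum : k + m = n := Finset.HasAntidiagonal.mem_antidiagonal.mp hkl
      rw [hFa]
      rw [mul_pow, ← hsum, pow_add]
      ring
    rw [Finset.sum_congr rfl hterm, ← Finset.sum_mul]
    match n with
    | 0 => simp [tc_zero]
    | 1 =>
      rw [if_pos rfl]
      rw [show Finset.HasAntidiagonal.antidiagonal 1 = {(0, 1), (1, 0)} from rfl]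
      rw [Finset.sum_insert (by decide), Finset.sum_singleton]
      simp [tc_zero, tc_one]
    | (n + 2) =>
      rw [if_neg (by omega), coeff_collapse (n + 2) (by omega), zero_mul]
  rw [hstep1, hstep2, hstep3, tsum_congr hcoeff, tsum_ite_eq]

/-- `T(t e^{-t}) = t` on all of `[0,1]`, by analytic continuation and continuity. -/
lemma g_Icc : ∀ t ∈ Set.Icc (0 : ℝ) 1, treeFun (t * Real.exp (-t)) = t := by
  have hexp1 : (0 : ℝ) < Real.exp 1 := Real.exp_pos 1
  set φ : ℝ → ℝ := fun t => t * Real.exp (-t) with hφ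
  have hφ_an : AnalyticOnNhd ℝ φ (Set.Ioo (0 : ℝ) 1) := by
    intro x _
    exact (analyticAt_id).mul ((analyticAt_id).neg.rexp)
  have hmaps : ∀ t ∈ Set.Ioo (0 : ℝ) 1, φ t ∈ Metric.eball (0 : ℝ) rE := by
    intro t ht
    rw [Metric.emetric_ball_nnreal, Metric.mem_ball, dist_zero_right, Real.norm_eq_abs,
      rE_coe, abs_of_nonneg (mul_nonneg ht.1.le (Real.exp_pos _).le : (0:ℝ) ≤ φ t)]
    have h1 : t < Real.exp (t - 1) := by
      have := Real.add_one_lt_exp (x := t - 1) (by intro h; exact (ne_of_lt ht.2) (sub_eq_zero.mp h))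
      linarith
    rw [Real.exp_sub] at h1
    have h2 : φ t * Real.exp t < (Real.exp 1)⁻¹ * Real.exp t := by
      calc φ t * Real.exp t = t * (Real.exp (-t) * Real.exp t) := by ring
        _ = t := by rw [← Real.exp_add, neg_add_cancel, Real.exp_zero, mul_one]
        _ < Real.exp t / Real.exp 1 := h1
        _ = (Real.exp 1)⁻¹ * Real.exp t := by ring
    exact lt_of_mul_lt_mul_right h2 (Real.exp_pos t).le
  have hg_an : AnalyticOnNhd ℝ (treeFun ∘ φ) (Set.Ioo (0 : ℝ) 1) :=
    treeFun_analytic.comp hφ_an hmaps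
  have hz₀ : (4 * Real.exp 1)⁻¹ ∈ Set.Ioo (0 : ℝ) 1 := by
    constructor
    · positivity
    · rw [inv_lt_one_iff₀]
      right
      linarith [Real.exp_one_gt_d9]
  have hev : (treeFun ∘ φ) =ᶠ[𝓝 ((4 * Real.exp 1)⁻¹)] id := by
    have hmem : Set.Ioo (0 : ℝ) ((2 * Real.exp 1)⁻¹) ∈ 𝓝 ((4 * Real.exp 1)⁻¹) := by
      apply isOpen_Ioo.mem_nhds
      constructor
      · positivity
      · apply inv_strictAnti₀ (by positivity)
        linarith
    filter_upwards [hmem] with x hx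
    exact g_small hx.1.le hx.2.le
  have hIoo : Set.EqOn (treeFun ∘ φ) id (Set.Ioo (0 : ℝ) 1) :=
    hg_an.eqOn_of_preconnected_of_eventuallyEq analyticOnNhd_id isPreconnected_Ioo hz₀ hev
  have hφmaps : ∀ t ∈ Set.Icc (0 : ℝ) 1, φ t ∈ Set.Icc (0 : ℝ) (Real.exp 1)⁻¹ := by
    intro t ht
    constructor
    · exact mul_nonneg ht.1 (Real.exp_pos _).le
    · have h1 : t ≤ Real.exp (t - 1) := by
        have := Real.add_one_le_exp (t - 1)
        linarith
      rw [Real.exp_sub] at h1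
      have h2 : φ t * Real.exp t ≤ (Real.exp 1)⁻¹ * Real.exp t := by
        calc φ t * Real.exp t = t * (Real.exp (-t) * Real.exp t) := by ring
          _ = t := by rw [← Real.exp_add, neg_add_cancel, Real.exp_zero, mul_one]
          _ ≤ Real.exp t / Real.exp 1 := h1
          _ = (Real.exp 1)⁻¹ * Real.exp t := by ring
      exact le_of_mul_le_mul_right h2 (Real.exp_pos t)
  have hgcont : ContinuousOn (treeFun ∘ φ) (Set.Icc (0 : ℝ) 1) := by
    apply treeFun_contOn.comp
    · exact (continuous_id.mul (continuous_neg.rexp)).continuousOn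
    · exact hφmaps
  have hIcc : Set.EqOn (treeFun ∘ φ) id (Set.Icc (0 : ℝ) 1) := by
    apply hIoo.of_subset_closure hgcont continuousOn_id Set.Ioo_subset_Icc_self
    rw [closure_Ioo (by norm_num : (0:ℝ) ≠ 1)]
  exact fun t ht => hIcc ht

theorem treeFun_at_inv_e :
    (∀ z ∈ Set.Icc (0 : ℝ) (1 / Real.exp 1), treeFun z = z * Real.exp (treeFun z)) ∧
    treeFun (1 / Real.exp 1) = 1 := by
  have hexp1 : (0 : ℝ) < Real.exp 1 := Real.exp_pos 1
  have hφcont : ContinuousOn (fun t : ℝ => t * Real.exp (-t)) (Set.Icc 0 1) :=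
    (continuous_id.mul (continuous_neg.rexp)).continuousOn
  have h1e : (1 : ℝ) * Real.exp (-1) = 1 / Real.exp 1 := by
    rw [one_mul, Real.exp_neg, one_div]
  constructor
  · intro z hz
    have hz' : z ∈ Set.Icc ((0:ℝ) * Real.exp (-(0:ℝ))) ((1:ℝ) * Real.exp (-(1:ℝ))) := by
      constructor
      · simpa using hz.1
      · rw [h1e]; exact hz.2
    obtain ⟨t, ht, hφt⟩ := intermediate_value_Icc zero_le_one hφcont hz'
    have hT := g_Icc t ht
    rw [← hφt, hT]
    rw [mul_assoc, ← Real.exp_add, neg_add_cancel, Real.exp_zero, mul_one]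
  · have := g_Icc 1 ⟨zero_le_one, le_refl 1⟩
    rwa [h1e] at this
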